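/- Let T be an invertible r×r complex matrix such that the iterated Aluthge transforms Δⁿ(T) converge to some matrix L. Then L is normal and has the same characteristic polynomial as T. -/

import Mathlib

open Matrix Filter Topology
open scoped ComplexOrder

namespace Matrix.PosSemidef

variable {n 𝕜 : Type*} [Fintype n] [DecidableEq n] [RCLike 𝕜] {A : Matrix n n 𝕜}

/-- The positive semidefinite square root of a positive semidefinite matrix -/
noncomputable def sqrt (hA : A.PosSemidef) : Matrix n n 𝕜 :=
  hA.1.eigenvectorUnitary.1 * diagonal ((↑) ∘ (√·) ∘ hA.1.eigenvalues) *
  (star hA.1.eigenvectorUnitary : Matrix n n 𝕜)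

lemma posSemidef_sqrt (hA : A.PosSemidef) : PosSemidef hA.sqrt := by
  apply PosSemidef.mul_mul_conjTranspose_same
  refine posSemidef_diagonal_iff.mpr fun i ↦ ?_
  rw [Function.comp_apply, RCLike.nonneg_iff]
  constructor
  · simp only [Function.comp_apply, RCLike.ofReal_re]
    exact Real.sqrt_nonneg _
  · simp only [Function.comp_apply, RCLike.ofReal_im]

lemma sqrt_mul_self (hA : A.PosSemidef) : hA.sqrt * hA.sqrt = A := by
  have hU : (star hA.1.eigenvectorUnitary : Matrix n n 𝕜) * hA.1.eigenvectorUnitary.1 = 1 :=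
    Unitary.star_mul_self_of_mem hA.1.eigenvectorUnitary.2
  conv_rhs => rw [hA.1.spectral_theorem, Unitary.conjStarAlgAut_apply]
  unfold sqrt
  calc _ = hA.1.eigenvectorUnitary.1 * (diagonal ((↑) ∘ (√·) ∘ hA.1.eigenvalues) *
        ((star hA.1.eigenvectorUnitary : Matrix n n 𝕜) * hA.1.eigenvectorUnitary.1) *
        diagonal ((↑) ∘ (√·) ∘ hA.1.eigenvalues)) *
        (star hA.1.eigenvectorUnitary : Matrix n n 𝕜) := by simp only [Matrix.mul_assoc]
    _ = _ := by
      rw [hU, Matrix.mul_one, diagonal_mul_diagonal]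
      congr 3
      funext i
      simp only [Function.comp_apply]
      rw [← RCLike.ofReal_mul, Real.mul_self_sqrt (hA.eigenvalues_nonneg i)]

end Matrix.PosSemidef

/-- `|T| = (T*T)^{1/2}`, the positive semidefinite square root of `Tᴴ * T`. -/
noncomputable def matAbs {r : ℕ} (T : Matrix (Fin r) (Fin r) ℂ) :
    Matrix (Fin r) (Fin r) ℂ :=
  (Matrix.posSemidef_conjTranspose_mul_self T).sqrt

/-- `|T|^{1/2}`, the positive semidefinite square root of `|T|`. -/
noncomputable def matAbsSqrt {r : ℕ} (T : Matrix (Fin r) (Fin r) ℂ) :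
    Matrix (Fin r) (Fin r) ℂ :=
  (Matrix.posSemidef_conjTranspose_mul_self T).posSemidef_sqrt.sqrt

/-- The Aluthge transform `Δ(T) = |T|^{1/2} U |T|^{1/2}`, where for invertible `T`
the unitary factor of the polar decomposition `T = U|T|` is `U = T|T|⁻¹`. -/
noncomputable def aluthge {r : ℕ} (T : Matrix (Fin r) (Fin r) ℂ) :
    Matrix (Fin r) (Fin r) ℂ :=
  matAbsSqrt T * (T * (matAbs T)⁻¹) * matAbsSqrt T

namespace AluthgeProof

variable {r : ℕ}


lemma matAbs_herm (S : Matrix (Fin r) (Fin r) ℂ) : (matAbs S).IsHermitian :=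
  (Matrix.posSemidef_conjTranspose_mul_self S).posSemidef_sqrt.1

lemma matAbs_mul_self (S : Matrix (Fin r) (Fin r) ℂ) : matAbs S * matAbs S = Sᴴ * S :=
  (Matrix.posSemidef_conjTranspose_mul_self S).sqrt_mul_self

lemma matAbsSqrt_herm (S : Matrix (Fin r) (Fin r) ℂ) : (matAbsSqrt S).IsHermitian :=
  (Matrix.posSemidef_conjTranspose_mul_self S).posSemidef_sqrt.posSemidef_sqrt.1

lemma matAbsSqrt_mul_self (S : Matrix (Fin r) (Fin r) ℂ) : matAbsSqrt S * matAbsSqrt S = matAbs S :=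
  (Matrix.posSemidef_conjTranspose_mul_self S).posSemidef_sqrt.sqrt_mul_self

lemma det_ne_zero_of_isUnit {S : Matrix (Fin r) (Fin r) ℂ} (h : IsUnit S) : S.det ≠ 0 :=
  isUnit_iff_ne_zero.mp ((Matrix.isUnit_iff_isUnit_det S).mp h)

lemma isUnit_matAbs {S : Matrix (Fin r) (Fin r) ℂ} (h : IsUnit S) : IsUnit (matAbs S) := by
  rw [Matrix.isUnit_iff_isUnit_det, isUnit_iff_ne_zero]
  intro h0
  have key : (matAbs S).det * (matAbs S).det = Sᴴ.det * S.det := by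
    rw [← Matrix.det_mul, ← Matrix.det_mul, matAbs_mul_self]
  rw [h0, mul_zero] at key
  have h1 : Sᴴ.det * S.det ≠ 0 := by
    rw [Matrix.det_conjTranspose]
    exact mul_ne_zero (star_ne_zero.mpr (det_ne_zero_of_isUnit h)) (det_ne_zero_of_isUnit h)
  exact h1 key.symm

lemma isUnit_matAbsSqrt {S : Matrix (Fin r) (Fin r) ℂ} (h : IsUnit S) : IsUnit (matAbsSqrt S) := by
  rw [Matrix.isUnit_iff_isUnit_det, isUnit_iff_ne_zero]
  intro h0
  have key : (matAbsSqrt S).det * (matAbsSqrt S).det = (matAbs S).det := by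
    rw [← Matrix.det_mul, matAbsSqrt_mul_self]
  rw [h0, mul_zero] at key
  exact det_ne_zero_of_isUnit (isUnit_matAbs h) key.symm

section Invertible

variable {S : Matrix (Fin r) (Fin r) ℂ} (hS : IsUnit S)

lemma matAbs_inv_mul (hS : IsUnit S) : (matAbs S)⁻¹ * matAbs S = 1 :=
  Matrix.nonsing_inv_mul _ ((Matrix.isUnit_iff_isUnit_det _).mp (isUnit_matAbs hS))

lemma matAbs_mul_inv (hS : IsUnit S) : matAbs S * (matAbs S)⁻¹ = 1 :=
  Matrix.mul_nonsing_inv _ ((Matrix.isUnit_iff_isUnit_det _).mp (isUnit_matAbs hS))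

lemma matAbsSqrt_inv_mul (hS : IsUnit S) : (matAbsSqrt S)⁻¹ * matAbsSqrt S = 1 :=
  Matrix.nonsing_inv_mul _ ((Matrix.isUnit_iff_isUnit_det _).mp (isUnit_matAbsSqrt hS))

lemma matAbsSqrt_mul_inv (hS : IsUnit S) : matAbsSqrt S * (matAbsSqrt S)⁻¹ = 1 :=
  Matrix.mul_nonsing_inv _ ((Matrix.isUnit_iff_isUnit_det _).mp (isUnit_matAbsSqrt hS))

lemma conjTranspose_U (hS : IsUnit S) :
    (S * (matAbs S)⁻¹)ᴴ = (matAbs S)⁻¹ * Sᴴ := by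
  rw [Matrix.conjTranspose_mul, Matrix.conjTranspose_nonsing_inv, (matAbs_herm S).eq]

lemma U_unitary_left (hS : IsUnit S) :
    (S * (matAbs S)⁻¹)ᴴ * (S * (matAbs S)⁻¹) = 1 := by
  rw [conjTranspose_U hS]
  calc (matAbs S)⁻¹ * Sᴴ * (S * (matAbs S)⁻¹)
      = (matAbs S)⁻¹ * (Sᴴ * S) * (matAbs S)⁻¹ := by
        simp only [Matrix.mul_assoc]
    _ = (matAbs S)⁻¹ * (matAbs S * matAbs S) * (matAbs S)⁻¹ := by
        rw [matAbs_mul_self]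
    _ = ((matAbs S)⁻¹ * matAbs S) * (matAbs S * (matAbs S)⁻¹) := by
        simp only [Matrix.mul_assoc]
    _ = 1 := by rw [matAbs_inv_mul hS, matAbs_mul_inv hS, one_mul]

lemma U_unitary_right (hS : IsUnit S) :
    (S * (matAbs S)⁻¹) * (S * (matAbs S)⁻¹)ᴴ = 1 :=
  mul_eq_one_comm.mp (U_unitary_left hS)

lemma polar (hS : IsUnit S) : (S * (matAbs S)⁻¹) * matAbs S = S := by
  rw [Matrix.mul_assoc, matAbs_inv_mul hS, Matrix.mul_one]

/-- The Aluthge transform is a similarity `B S B⁻¹`. -/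
lemma aluthge_conj (hS : IsUnit S) :
    aluthge S = matAbsSqrt S * S * (matAbsSqrt S)⁻¹ := by
  have hAinv : (matAbs S)⁻¹ = (matAbsSqrt S)⁻¹ * (matAbsSqrt S)⁻¹ := by
    rw [← Matrix.mul_inv_rev, matAbsSqrt_mul_self]
  rw [aluthge, hAinv]
  calc matAbsSqrt S * (S * ((matAbsSqrt S)⁻¹ * (matAbsSqrt S)⁻¹)) * matAbsSqrt S
      = matAbsSqrt S * S * (matAbsSqrt S)⁻¹ * ((matAbsSqrt S)⁻¹ * matAbsSqrt S) := by
        simp only [Matrix.mul_assoc]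
    _ = matAbsSqrt S * S * (matAbsSqrt S)⁻¹ := by
        rw [matAbsSqrt_inv_mul hS, Matrix.mul_one]

lemma charpoly_similar {P M : Matrix (Fin r) (Fin r) ℂ} (hP : IsUnit P) :
    (P * M * P⁻¹).charpoly = M.charpoly := by
  classical
  set f : ℂ →+* Polynomial ℂ := Polynomial.C
  have hPP : P * P⁻¹ = 1 :=
    Matrix.mul_nonsing_inv _ ((Matrix.isUnit_iff_isUnit_det _).mp hP)
  have hmap : f.mapMatrix P * f.mapMatrix P⁻¹ = 1 := by
    rw [← _root_.map_mul, hPP, _root_.map_one]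
  have key : charmatrix (P * M * P⁻¹)
      = f.mapMatrix P * charmatrix M * f.mapMatrix P⁻¹ := by
    unfold charmatrix
    rw [Matrix.mul_sub, Matrix.sub_mul]
    congr 1
    · have hc : Matrix.scalar (Fin r) (Polynomial.X : Polynomial ℂ) * f.mapMatrix P
          = f.mapMatrix P * Matrix.scalar (Fin r) (Polynomial.X : Polynomial ℂ) :=
        (Matrix.scalar_commute _ (fun r' => Commute.all _ r') _).eq
      rw [← hc, Matrix.mul_assoc, hmap, Matrix.mul_one]
    · simp only [_root_.map_mul]; rfl
  rw [Matrix.charpoly, key, Matrix.det_mul, Matrix.det_mul, Matrix.charpoly]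
  have hdet : (f.mapMatrix P).det * (f.mapMatrix P⁻¹).det = 1 := by
    rw [← Matrix.det_mul, hmap, Matrix.det_one]
  calc (f.mapMatrix P).det * (charmatrix M).det * (f.mapMatrix P⁻¹).det
      = (f.mapMatrix P).det * (f.mapMatrix P⁻¹).det * (charmatrix M).det := by ring
    _ = (charmatrix M).det := by rw [hdet, one_mul]

lemma charpoly_aluthge (hS : IsUnit S) : (aluthge S).charpoly = S.charpoly := by
  rw [aluthge_conj hS]
  exact charpoly_similar (isUnit_matAbsSqrt hS)

lemma isUnit_aluthge (hS : IsUnit S) : IsUnit (aluthge S) := by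
  rw [Matrix.isUnit_iff_isUnit_det, isUnit_iff_ne_zero]
  have hdet : (aluthge S).det = S.det := by
    have h1 := charpoly_aluthge hS
    rw [Matrix.det_eq_sign_charpoly_coeff, Matrix.det_eq_sign_charpoly_coeff, h1]
  rw [hdet]
  exact det_ne_zero_of_isUnit hS

/-- The trace identity relating the commutator `[A, U]` to the trace decrease of
the Aluthge transform. -/
lemma trace_comm_identity (hS : IsUnit S) :
    Matrix.trace ((matAbs S * (S * (matAbs S)⁻¹) - (S * (matAbs S)⁻¹) * matAbs S)ᴴ
      * (matAbs S * (S * (matAbs S)⁻¹) - (S * (matAbs S)⁻¹) * matAbs S))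
    = 2 * Matrix.trace (Sᴴ * S) - 2 * Matrix.trace ((aluthge S)ᴴ * aluthge S) := by
  set A := matAbs S with hAdef
  set U := S * (matAbs S)⁻¹ with hUdef
  have hA : Aᴴ = A := (matAbs_herm S).eq
  have hUl : Uᴴ * U = 1 := U_unitary_left hS
  have hUr : U * Uᴴ = 1 := U_unitary_right hS
  have hB : (matAbsSqrt S)ᴴ = matAbsSqrt S := (matAbsSqrt_herm S).eq
  have hBB : matAbsSqrt S * matAbsSqrt S = A := matAbsSqrt_mul_self S
  have hAA : A * A = Sᴴ * S := matAbs_mul_self S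
  -- trace of ΔᴴΔ equals trace (Uᴴ A U A)
  have hΔ : Matrix.trace ((aluthge S)ᴴ * aluthge S)
      = Matrix.trace (Uᴴ * A * U * A) := by
    have e : aluthge S = matAbsSqrt S * U * matAbsSqrt S := rfl
    rw [e]
    have e2 : (matAbsSqrt S * U * matAbsSqrt S)ᴴ
        = matAbsSqrt S * Uᴴ * matAbsSqrt S := by
      simp only [Matrix.conjTranspose_mul, hB, Matrix.mul_assoc]
    rw [e2]
    calc Matrix.trace (matAbsSqrt S * Uᴴ * matAbsSqrt S * (matAbsSqrt S * U * matAbsSqrt S))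
        = Matrix.trace ((matAbsSqrt S * Uᴴ) * A * (U * matAbsSqrt S)) := by
          rw [← hBB]; simp only [Matrix.mul_assoc]
      _ = Matrix.trace (matAbsSqrt S * (Uᴴ * A * U) * matAbsSqrt S) := by
          simp only [Matrix.mul_assoc]
      _ = Matrix.trace (matAbsSqrt S * (matAbsSqrt S * (Uᴴ * A * U))) := by
          rw [Matrix.trace_mul_cycle]
          simp only [Matrix.mul_assoc]
      _ = Matrix.trace (A * (Uᴴ * A * U)) := by
          rw [← Matrix.mul_assoc, hBB]
      _ = Matrix.trace (Uᴴ * A * U * A) := Matrix.trace_mul_comm _ _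
  have hCconj : (A * U - U * A)ᴴ = Uᴴ * A - A * Uᴴ := by
    simp only [Matrix.conjTranspose_sub, Matrix.conjTranspose_mul, hA]
  rw [hCconj, hΔ]
  have expand : (Uᴴ * A - A * Uᴴ) * (A * U - U * A)
      = Uᴴ * A * (A * U) - Uᴴ * A * (U * A) - A * Uᴴ * (A * U) + A * Uᴴ * (U * A) := by
    rw [Matrix.sub_mul, Matrix.mul_sub, Matrix.mul_sub]
    abel
  rw [expand, Matrix.trace_add, Matrix.trace_sub, Matrix.trace_sub]
  have t1 : Matrix.trace (Uᴴ * A * (A * U)) = Matrix.trace (Sᴴ * S) := by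
    calc Matrix.trace (Uᴴ * A * (A * U))
        = Matrix.trace (Uᴴ * (A * A) * U) := by simp only [Matrix.mul_assoc]
      _ = Matrix.trace (U * (Uᴴ * (A * A))) := by
          rw [Matrix.trace_mul_comm]
      _ = Matrix.trace ((U * Uᴴ) * (A * A)) := by simp only [Matrix.mul_assoc]
      _ = Matrix.trace (Sᴴ * S) := by rw [hUr, Matrix.one_mul, hAA]
  have t4 : Matrix.trace (A * Uᴴ * (U * A)) = Matrix.trace (Sᴴ * S) := by
    calc Matrix.trace (A * Uᴴ * (U * A))
        = Matrix.trace (A * ((Uᴴ * U) * A)) := by simp only [Matrix.mul_assoc]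
      _ = Matrix.trace (Sᴴ * S) := by rw [hUl, Matrix.one_mul, hAA]
  have t2 : Matrix.trace (Uᴴ * A * (U * A)) = Matrix.trace (Uᴴ * A * U * A) := by
    simp only [Matrix.mul_assoc]
  have t3 : Matrix.trace (A * Uᴴ * (A * U)) = Matrix.trace (Uᴴ * A * U * A) := by
    calc Matrix.trace (A * Uᴴ * (A * U))
        = Matrix.trace (A * (Uᴴ * A * U)) := by simp only [Matrix.mul_assoc]
      _ = Matrix.trace (Uᴴ * A * U * A) := Matrix.trace_mul_comm _ _
  rw [t1, t2, t3, t4]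
  ring

/-- The normality defect of `S` in terms of the commutator `C = AU - UA`. -/
lemma comm_formula (hS : IsUnit S) :
    Sᴴ * S - S * Sᴴ
      = (matAbs S * (matAbs S * (S * (matAbs S)⁻¹) - (S * (matAbs S)⁻¹) * matAbs S)
        + (matAbs S * (S * (matAbs S)⁻¹) - (S * (matAbs S)⁻¹) * matAbs S) * matAbs S)
        * (S * (matAbs S)⁻¹)ᴴ := by
  set A := matAbs S with hAdef
  set U := S * (matAbs S)⁻¹ with hUdef
  have hUr : U * Uᴴ = 1 := U_unitary_right hS
  have hAA : A * A = Sᴴ * S := matAbs_mul_self S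
  have hpolar : U * A = S := polar hS
  have expand : (A * (A * U - U * A) + (A * U - U * A) * A) * Uᴴ
      = (A * (A * U)) * Uᴴ - (U * A) * (A * Uᴴ) := by
    rw [Matrix.mul_sub, Matrix.sub_mul]
    have : A * (A * U) - A * (U * A) + (A * U * A - U * A * A) = A * (A * U) - U * A * A := by
      simp only [Matrix.mul_assoc]
      abel
    rw [this, Matrix.sub_mul]
    simp only [Matrix.mul_assoc]
  rw [expand]
  have e1 : (A * (A * U)) * Uᴴ = Sᴴ * S := by
    calc (A * (A * U)) * Uᴴ = (A * A) * (U * Uᴴ) := by simp only [Matrix.mul_assoc]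
      _ = Sᴴ * S := by rw [hUr, Matrix.mul_one, hAA]
  have e2 : (U * A) * (A * Uᴴ) = S * Sᴴ := by
    have hA : Aᴴ = A := (matAbs_herm S).eq
    have hSconj : Sᴴ = A * Uᴴ := by
      rw [← hpolar, Matrix.conjTranspose_mul, hA]
    rw [hpolar, ← hSconj]
  rw [e1, e2]

end Invertible

/-- trace of `Mᴴ M` as a sum of `normSq` of entries. -/
lemma trace_conjTranspose_mul_self (M : Matrix (Fin r) (Fin r) ℂ) :
    Matrix.trace (Mᴴ * M) = ((∑ j, ∑ i, Complex.normSq (M i j) : ℝ) : ℂ) := by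
  rw [Matrix.trace]
  push_cast
  simp only [Matrix.diag, Matrix.mul_apply, Matrix.conjTranspose_apply,
    Complex.normSq_eq_conj_mul_self]
  rfl

lemma normSq_entry_le (M : Matrix (Fin r) (Fin r) ℂ) (i j : Fin r) :
    Complex.normSq (M i j) ≤ (Matrix.trace (Mᴴ * M)).re := by
  rw [trace_conjTranspose_mul_self, Complex.ofReal_re]
  calc Complex.normSq (M i j)
      ≤ ∑ i', Complex.normSq (M i' j) := by
        exact Finset.single_le_sum (f := fun i' => Complex.normSq (M i' j))
          (fun _ _ => Complex.normSq_nonneg _) (Finset.mem_univ i)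
    _ ≤ ∑ j', ∑ i', Complex.normSq (M i' j') := by
        exact Finset.single_le_sum (f := fun j' => ∑ i', Complex.normSq (M i' j'))
          (fun _ _ => Finset.sum_nonneg fun _ _ => Complex.normSq_nonneg _)
          (Finset.mem_univ j)

lemma norm_entry_le_sqrt (M : Matrix (Fin r) (Fin r) ℂ) (i j : Fin r) :
    ‖M i j‖ ≤ Real.sqrt ((Matrix.trace (Mᴴ * M)).re) := by
  have h := normSq_entry_le M i j
  have : ‖M i j‖ = Real.sqrt (Complex.normSq (M i j)) := by
    rw [Complex.norm_def]
  rw [this]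
  exact Real.sqrt_le_sqrt h

/-- Entries of a matrix with `Uᴴ U = 1` have norm at most 1. -/
lemma norm_entry_le_one_of_unitary {U : Matrix (Fin r) (Fin r) ℂ} (hU : Uᴴ * U = 1) (i j : Fin r) :
    ‖U i j‖ ≤ 1 := by
  have h : (Uᴴ * U) j j = 1 := by rw [hU]; simp
  rw [Matrix.mul_apply] at h
  simp only [Matrix.conjTranspose_apply] at h
  have h2 : (∑ k, Complex.normSq (U k j) : ℝ) = 1 := by
    have : (((∑ k, Complex.normSq (U k j) : ℝ)) : ℂ) = 1 := by
      push_cast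
      rw [← h]
      congr 1
      ext k
      rw [Complex.normSq_eq_conj_mul_self]
      rfl
    exact_mod_cast this
  have h3 : Complex.normSq (U i j) ≤ 1 := by
    rw [← h2]
    exact Finset.single_le_sum (f := fun k => Complex.normSq (U k j))
      (fun _ _ => Complex.normSq_nonneg _) (Finset.mem_univ i)
  have : ‖U i j‖ = Real.sqrt (Complex.normSq (U i j)) := by
    rw [Complex.norm_def]
  rw [this]
  calc Real.sqrt (Complex.normSq (U i j)) ≤ Real.sqrt 1 := Real.sqrt_le_sqrt h3
    _ = 1 := Real.sqrt_one

/-- `eval z (charpoly M) = det (z I - M)`. -/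
lemma eval_charpoly (z : ℂ) (M : Matrix (Fin r) (Fin r) ℂ) :
    (M.charpoly).eval z = (Matrix.scalar (Fin r) z - M).det := by
  classical
  have hmap : (charmatrix M).map (Polynomial.evalRingHom z) = Matrix.scalar (Fin r) z - M := by
    ext i j
    by_cases h : i = j
    · subst h
      simp [charmatrix_apply, Matrix.scalar_apply, Matrix.sub_apply]
    · simp [charmatrix_apply_ne _ _ _ h, Matrix.scalar_apply, Matrix.sub_apply,
        Matrix.diagonal_apply_ne _ h]
  have : (Polynomial.evalRingHom z) ((charmatrix M).det)
      = ((charmatrix M).map (Polynomial.evalRingHom z)).det := RingHom.map_det _ _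
  rw [Matrix.charpoly]
  calc ((charmatrix M).det).eval z = (Polynomial.evalRingHom z) ((charmatrix M).det) := rfl
    _ = ((charmatrix M).map (Polynomial.evalRingHom z)).det := this
    _ = (Matrix.scalar (Fin r) z - M).det := by rw [hmap]

end AluthgeProof

open AluthgeProof

/-- If the iterated Aluthge transforms of an invertible matrix `T` converge to
`L`, then `L` is normal and has the same characteristic polynomial as `T`. -/
theorem aluthge_limit_normal_same_charpoly {r : ℕ}
    (T L : Matrix (Fin r) (Fin r) ℂ) (hT : IsUnit T)
    (hlim : Filter.Tendsto (fun n => aluthge^[n] T) atTop (𝓝 L)) :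
    Lᴴ * L = L * Lᴴ ∧ L.charpoly = T.charpoly := by
  classical
  set Sn : ℕ → Matrix (Fin r) (Fin r) ℂ := fun n => aluthge^[n] T with hSndef
  have hSn_succ : ∀ n, Sn (n + 1) = aluthge (Sn n) := by
    intro n
    simp only [hSndef, Function.iterate_succ_apply']
  have hSn_unit : ∀ n, IsUnit (Sn n) := by
    intro n
    induction n with
    | zero => exact hT
    | succ n ih => rw [hSn_succ]; exact isUnit_aluthge ih
  have hSn_charpoly : ∀ n, (Sn n).charpoly = T.charpoly := by
    intro n
    induction n with
    | zero => rfl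
    | succ n ih => rw [hSn_succ, charpoly_aluthge (hSn_unit n), ih]
  -- the τ function
  set τ : Matrix (Fin r) (Fin r) ℂ → ℂ := fun M => Matrix.trace (Mᴴ * M) with hτdef
  have hτcont : Continuous τ := by
    exact ((continuous_id.matrix_conjTranspose).matrix_mul continuous_id).matrix_trace
  have hτ1 : Tendsto (fun n => τ (Sn n)) atTop (𝓝 (τ L)) :=
    (hτcont.tendsto L).comp hlim
  have hτ2 : Tendsto (fun n => τ (Sn (n + 1))) atTop (𝓝 (τ L)) :=
    hτ1.comp (tendsto_add_atTop_nat 1)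
  -- commutator sequence
  set An : ℕ → Matrix (Fin r) (Fin r) ℂ := fun n => matAbs (Sn n) with hAndef
  set Un : ℕ → Matrix (Fin r) (Fin r) ℂ := fun n => Sn n * (An n)⁻¹ with hUndef
  set Cn : ℕ → Matrix (Fin r) (Fin r) ℂ := fun n => An n * Un n - Un n * An n with hCndef
  have htraceC : ∀ n, Matrix.trace ((Cn n)ᴴ * Cn n) = 2 * τ (Sn n) - 2 * τ (Sn (n + 1)) := by
    intro n
    have := trace_comm_identity (hSn_unit n)
    rw [hSn_succ n]
    exact this
  have hC0 : Tendsto (fun n => Matrix.trace ((Cn n)ᴴ * Cn n)) atTop (𝓝 0) := by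
    have : Tendsto (fun n => 2 * τ (Sn n) - 2 * τ (Sn (n + 1))) atTop
        (𝓝 (2 * τ L - 2 * τ L)) := ((hτ1.const_mul 2).sub (hτ2.const_mul 2))
    rw [sub_self] at this
    exact this.congr fun n => (htraceC n).symm
  -- real version
  have hψ0 : Tendsto (fun n => (Matrix.trace ((Cn n)ᴴ * Cn n)).re) atTop (𝓝 0) := by
    have := (Complex.continuous_re.tendsto 0).comp hC0
    simpa [Function.comp_def] using this
  -- entries of Cn tend to 0
  have hCn_entry : ∀ i j, Tendsto (fun n => Cn n i j) atTop (𝓝 0) := by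
    intro i j
    rw [tendsto_zero_iff_norm_tendsto_zero]
    have hb : ∀ n, ‖Cn n i j‖ ≤ Real.sqrt ((Matrix.trace ((Cn n)ᴴ * Cn n)).re) :=
      fun n => norm_entry_le_sqrt (Cn n) i j
    have hsq : Tendsto (fun n => Real.sqrt ((Matrix.trace ((Cn n)ᴴ * Cn n)).re)) atTop (𝓝 0) := by
      have := (Real.continuous_sqrt.tendsto 0).comp hψ0
      simpa [Function.comp_def] using this
    refine squeeze_zero (fun n => norm_nonneg _) hb hsq
  -- entries of An are bounded
  have hAn_bdd : ∀ i j, IsBoundedUnder (· ≤ ·) atTop (fun n => ‖An n i j‖) := by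
    intro i j
    have hle : ∀ n, ‖An n i j‖ ≤ Real.sqrt ((τ (Sn n)).re) := by
      intro n
      have h1 := norm_entry_le_sqrt (An n) i j
      have h2 : (An n)ᴴ * An n = (Sn n)ᴴ * Sn n := by
        rw [(matAbs_herm (Sn n)).eq, matAbs_mul_self]
      rw [h2] at h1
      exact h1
    have hsq : Tendsto (fun n => Real.sqrt ((τ (Sn n)).re)) atTop
        (𝓝 (Real.sqrt ((τ L).re))) := by
      exact (Real.continuous_sqrt.tendsto _).comp ((Complex.continuous_re.tendsto _).comp hτ1)
    exact hsq.isBoundedUnder_le.mono_le (Eventually.of_forall hle)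
  -- entries of Un are bounded by 1
  have hUn_bdd : ∀ i j, ∀ n, ‖Un n i j‖ ≤ 1 := by
    intro i j n
    exact norm_entry_le_one_of_unitary (U_unitary_left (hSn_unit n)) i j
  -- helper: bounded * null and null * bounded
  have bdd_mul_null : ∀ {f g : ℕ → ℂ}, IsBoundedUnder (· ≤ ·) atTop (fun n => ‖f n‖) →
      Tendsto g atTop (𝓝 0) → Tendsto (fun n => f n * g n) atTop (𝓝 0) := by
    intro f g hf hg
    simpa [mul_comm] using hg.zero_mul_isBoundedUnder_le hf
  -- entries of An * Cn and Cn * An tend to 0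
  have hACn : ∀ i j, Tendsto (fun n => (An n * Cn n) i j) atTop (𝓝 0) := by
    intro i j
    have : ∀ n, (An n * Cn n) i j = ∑ k, An n i k * Cn n k j := fun n => Matrix.mul_apply
    simp only [Matrix.mul_apply]
    have h : Tendsto (fun n => ∑ k, An n i k * Cn n k j) atTop (𝓝 (∑ k : Fin r, (0 : ℂ))) := by
      exact tendsto_finset_sum _ fun k _ => bdd_mul_null (hAn_bdd i k) (hCn_entry k j)
    simpa using h
  have hCAn : ∀ i j, Tendsto (fun n => (Cn n * An n) i j) atTop (𝓝 0) := by
    intro i j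
    simp only [Matrix.mul_apply]
    have h : Tendsto (fun n => ∑ k, Cn n i k * An n k j) atTop (𝓝 (∑ k : Fin r, (0 : ℂ))) := by
      refine tendsto_finset_sum _ fun k _ => ?_
      exact (hCn_entry i k).zero_mul_isBoundedUnder_le (hAn_bdd k j)
    simpa using h
  -- the normality defect tends to 0
  have hDn : Tendsto (fun n => (Sn n)ᴴ * Sn n - Sn n * (Sn n)ᴴ) atTop (𝓝 0) := by
    have hformula : ∀ n, (Sn n)ᴴ * Sn n - Sn n * (Sn n)ᴴ
        = (An n * Cn n + Cn n * An n) * (Un n)ᴴ := fun n => comm_formula (hSn_unit n)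
    apply tendsto_pi_nhds.mpr
    intro i
    rw [tendsto_pi_nhds]
    intro j
    have hentry : ∀ n, ((Sn n)ᴴ * Sn n - Sn n * (Sn n)ᴴ) i j
        = ∑ k, ((An n * Cn n) i k + (Cn n * An n) i k) * star (Un n j k) := by
      intro n
      rw [hformula n]
      simp [Matrix.mul_apply, Matrix.conjTranspose_apply]
    have h : Tendsto (fun n => ∑ k, ((An n * Cn n) i k + (Cn n * An n) i k)
        * star (Un n j k)) atTop (𝓝 (∑ k : Fin r, (0 : ℂ))) := by
      refine tendsto_finset_sum _ fun k _ => ?_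
      have hnull : Tendsto (fun n => (An n * Cn n) i k + (Cn n * An n) i k) atTop (𝓝 0) := by
        simpa using (hACn i k).add (hCAn i k)
      refine hnull.zero_mul_isBoundedUnder_le ?_
      refine isBoundedUnder_of ⟨1, fun n => ?_⟩
      simpa [norm_star] using hUn_bdd j k n
    have h0 : Tendsto (fun n => ((Sn n)ᴴ * Sn n - Sn n * (Sn n)ᴴ) i j) atTop (𝓝 0) := by
      simpa using h.congr fun n => (hentry n).symm
    simpa using h0
  -- the normality defect tends to Lᴴ L - L Lᴴ
  have hcont : Continuous (fun M : Matrix (Fin r) (Fin r) ℂ => Mᴴ * M - M * Mᴴ) := by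
    exact ((continuous_id.matrix_conjTranspose).matrix_mul continuous_id).sub
      (continuous_id.matrix_mul (continuous_id.matrix_conjTranspose))
  have hDL : Tendsto (fun n => (Sn n)ᴴ * Sn n - Sn n * (Sn n)ᴴ) atTop
      (𝓝 (Lᴴ * L - L * Lᴴ)) := (hcont.tendsto L).comp hlim
  have hnormal : Lᴴ * L - L * Lᴴ = 0 := tendsto_nhds_unique hDL hDn
  constructor
  · exact sub_eq_zero.mp hnormal
  · -- charpoly equality
    refine Polynomial.funext fun z => ?_
    have hdet_cont : Continuous (fun M : Matrix (Fin r) (Fin r) ℂ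
        => (Matrix.scalar (Fin r) z - M).det) := (continuous_const.sub continuous_id).matrix_det
    have h1 : Tendsto (fun n => (Matrix.scalar (Fin r) z - Sn n).det) atTop
        (𝓝 ((Matrix.scalar (Fin r) z - L).det)) := (hdet_cont.tendsto L).comp hlim
    have h2 : ∀ n, (Matrix.scalar (Fin r) z - Sn n).det = (T.charpoly).eval z := by
      intro n
      rw [← AluthgeProof.eval_charpoly, hSn_charpoly n]
    have h3 : Tendsto (fun n => (Matrix.scalar (Fin r) z - Sn n).det) atTop
        (𝓝 ((T.charpoly).eval z)) := by
      rw [show (fun n => (Matrix.scalar (Fin r) z - Sn n).det)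
        = fun _ => (T.charpoly).eval z from funext h2]
      exact tendsto_const_nhds
    have := tendsto_nhds_unique h1 h3
    rw [AluthgeProof.eval_charpoly z L, this]
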